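/- Let ξ and η be invariant random measures on ℝ. Then for P-a.e. ω, for all u ∈ [0,1] and all s, t ∈ ℝ, one has τ^u(θ_tω, s − t) = τ^u(ω, s) − t (with ∞ − t := ∞). In particular each τ^u is an allocation, and K(ω,s,C) := ∫₀¹ 1{τ^u(ω,s) ∈ C} du defines an invariant transport kernel. -/

import Mathlib

open MeasureTheory

/-- `τ^u(s) := inf{t > s : u μ{s} + μ((s,t)) ≤ ν[s,t]}`, with `inf ∅ = ∞`. -/
noncomputable def tauU (μ ν : Measure ℝ) (u s : ℝ) : EReal :=
  sInf (Real.toEReal ''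
    {t : ℝ | s < t ∧ ENNReal.ofReal u * μ {s} + μ (Set.Ioo s t) ≤ ν (Set.Icc s t)})

/-- The transport kernel `K(s, C) := ∫₀¹ 1{τ^u(s) ∈ C} du`. -/
noncomputable def tauKernel (μ ν : Measure ℝ) (s : ℝ) (C : Set ℝ) : ENNReal :=
  volume {u : ℝ | u ∈ Set.Icc (0 : ℝ) 1 ∧ tauU μ ν u s ∈ Real.toEReal '' C}

/-- Subtraction of a real constant as an order isomorphism of `EReal`. -/
noncomputable def erealSubIso (t : ℝ) : EReal ≃o EReal where
  toFun x := x - (t : EReal)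
  invFun x := x + (t : EReal)
  left_inv x := EReal.sub_add_cancel
  right_inv x := EReal.add_sub_cancel_right
  map_rel_iff' := by
    intro x y
    simp only [Equiv.coe_fn_mk, sub_eq_add_neg, ← EReal.coe_neg]
    exact (EReal.addLECancellable_coe (-t)).add_le_add_iff_right

lemma ereal_sInf_sub (A : Set EReal) (t : ℝ) :
    sInf ((fun x => x - (t : EReal)) '' A) = sInf A - (t : EReal) :=
  by rw [sInf_image]; exact ((erealSubIso t).map_sInf A).symm

lemma tauU_shift (μ ν : Measure ℝ) (u s t : ℝ) :
    tauU (μ.map (fun x => x - t)) (ν.map (fun x => x - t)) u (s - t)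
      = tauU μ ν u s - (t : EReal) := by
  have hmeas : Measurable fun x : ℝ => x - t := measurable_id.sub_const t
  have hset : {r : ℝ | s - t < r ∧ ENNReal.ofReal u * (μ.map (fun x => x - t)) {s - t}
        + (μ.map (fun x => x - t)) (Set.Ioo (s - t) r)
        ≤ (ν.map (fun x => x - t)) (Set.Icc (s - t) r)}
      = (fun r => r - t) ''
        {r : ℝ | s < r ∧ ENNReal.ofReal u * μ {s} + μ (Set.Ioo s r) ≤ ν (Set.Icc s r)} := by
    ext r
    have h1 : (fun x : ℝ => x - t) ⁻¹' {s - t} = {s} := by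
      ext x; simp [sub_left_inj]
    have h2 : (fun x : ℝ => x - t) ⁻¹' Set.Ioo (s - t) r = Set.Ioo s (r + t) := by
      ext x; simp only [Set.mem_preimage, Set.mem_Ioo]
      constructor <;> rintro ⟨a, b⟩ <;> exact ⟨by linarith, by linarith⟩
    have h3 : (fun x : ℝ => x - t) ⁻¹' Set.Icc (s - t) r = Set.Icc s (r + t) := by
      ext x; simp only [Set.mem_preimage, Set.mem_Icc]
      constructor <;> rintro ⟨a, b⟩ <;> exact ⟨by linarith, by linarith⟩
    simp only [Set.mem_setOf_eq, Set.mem_image,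
      Measure.map_apply hmeas (measurableSet_singleton _),
      Measure.map_apply hmeas measurableSet_Ioo,
      Measure.map_apply hmeas measurableSet_Icc, h1, h2, h3]
    constructor
    · rintro ⟨h1', h2'⟩
      exact ⟨r + t, ⟨by linarith, h2'⟩, by ring⟩
    · rintro ⟨x, ⟨hx1, hx2⟩, rfl⟩
      constructor
      · linarith
      · have : x - t + t = x := by ring
        rw [this]; exact hx2
  have himg : Real.toEReal '' ((fun r => r - t) ''
      {r : ℝ | s < r ∧ ENNReal.ofReal u * μ {s} + μ (Set.Ioo s r) ≤ ν (Set.Icc s r)})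
      = (fun x => x - (t : EReal)) '' (Real.toEReal ''
      {r : ℝ | s < r ∧ ENNReal.ofReal u * μ {s} + μ (Set.Ioo s r) ≤ ν (Set.Icc s r)}) := by
    rw [Set.image_image, Set.image_image]
    exact Set.image_congr fun x _ => EReal.coe_sub x t
  rw [tauU, tauU, hset, himg, ereal_sInf_sub]

lemma tauKernel_shift (μ ν : Measure ℝ) (s : ℝ) (C : Set ℝ)
    (h : ∀ u ∈ Set.Icc (0:ℝ) 1,
      tauU (μ.map (fun x => x - s)) (ν.map (fun x => x - s)) u 0 = tauU μ ν u s - (s : EReal)) :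
    tauKernel (μ.map (fun x => x - s)) (ν.map (fun x => x - s)) 0 ((fun x => x + s) ⁻¹' C)
      = tauKernel μ ν s C := by
  unfold tauKernel
  congr 1
  ext u
  simp only [Set.mem_setOf_eq, and_congr_right_iff]
  intro hu
  rw [h u hu]
  constructor
  · rintro ⟨x, hx, hxe⟩
    refine ⟨x + s, hx, ?_⟩
    have := congrArg (fun z => z + (s : EReal)) hxe
    rw [EReal.sub_add_cancel] at this
    rw [← this]
    exact (EReal.coe_add x s)
  · rintro ⟨x, hx, hxe⟩
    refine ⟨x - s, by simpa using hx, ?_⟩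
    rw [← hxe, ← EReal.coe_sub]

/-- For invariant random measures `ξ` and `η`, a.e. `ω` satisfies
`τ^u(θ_t ω, s - t) = τ^u(ω, s) - t` for all `u ∈ [0,1]` and `s, t ∈ ℝ`; in particular each
`τ^u` is an allocation and `K(ω, s, C) := ∫₀¹ 1{τ^u(ω,s) ∈ C} du` is an invariant
transport kernel. -/
theorem tauU_equivariant
    {Ω : Type*} [MeasurableSpace Ω] (P : Measure Ω) [SigmaFinite P]
    (θ : ℝ → Ω → Ω)
    (hθmeas : Measurable fun p : Ω × ℝ => θ p.2 p.1)
    (hθzero : ∀ ω, θ 0 ω = ω)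
    (hθadd : ∀ s t : ℝ, ∀ ω, θ s (θ t ω) = θ (s + t) ω)
    (hstat : ∀ s : ℝ, P.map (θ s) = P)
    (herg : ∀ A : Set Ω, MeasurableSet A → (∀ s : ℝ, θ s '' A = A) → P A = 0 ∨ P Aᶜ = 0)
    (ξ η : Ω → Measure ℝ) (hξmeas : Measurable ξ) (hηmeas : Measurable η)
    (hξloc : ∀ᵐ ω ∂P, ∀ C : Set ℝ, IsCompact C → ξ ω C < ⊤)
    (hηloc : ∀ᵐ ω ∂P, ∀ C : Set ℝ, IsCompact C → η ω C < ⊤)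
    (hξinv : ∀ᵐ ω ∂P, ∀ t : ℝ, ξ (θ t ω) = (ξ ω).map fun x => x - t)
    (hηinv : ∀ᵐ ω ∂P, ∀ t : ℝ, η (θ t ω) = (η ω).map fun x => x - t) :
    -- equivariance of `τ^u`:
    (∀ᵐ ω ∂P, ∀ u : ℝ, u ∈ Set.Icc (0 : ℝ) 1 → ∀ s t : ℝ,
      tauU (ξ (θ t ω)) (η (θ t ω)) u (s - t) = tauU (ξ ω) (η ω) u s - (t : EReal)) ∧
    -- invariance of the transport kernel `K`:
    (∀ᵐ ω ∂P, ∀ s : ℝ, ∀ C : Set ℝ,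
      tauKernel (ξ (θ s ω)) (η (θ s ω)) 0 ((fun x => x + s) ⁻¹' C)
        = tauKernel (ξ ω) (η ω) s C) := by
  constructor
  · filter_upwards [hξinv, hηinv] with ω hξω hηω u hu s t
    rw [hξω t, hηω t, tauU_shift]
  · filter_upwards [hξinv, hηinv] with ω hξω hηω s C
    rw [hξω s, hηω s]
    refine tauKernel_shift _ _ _ _ ?_
    intro u hu
    have := tauU_shift (ξ ω) (η ω) u s s
    simpa using this
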